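/- Let X and Y be real normed spaces with the max norm on X × Y, and let x ∈ X be a smooth point of the unit sphere of X and y ∈ Y with ‖y‖ < 1. Then Birkhoff–James orthogonality is right-additive at (x,y): if (x,y) ⊥_B (u₁,v₁) and (x,y) ⊥_B (u₂,v₂), then (x,y) ⊥_B (u₁+u₂, v₁+v₂). -/

import Mathlib

def BJOrth {X : Type*} [NormedAddCommGroup X] [NormedSpace ℝ X] (x u : X) : Prop :=
  ∀ l : ℝ, ‖x + l • u‖ ≥ ‖x‖

/-- `x` is a smooth point of the unit sphere of `X`. -/
def SmoothPt {X : Type*} [NormedAddCommGroup X] [NormedSpace ℝ X] (x : X) : Prop :=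
  ‖x‖ = 1 ∧ ∃! f : X →L[ℝ] ℝ, ‖f‖ = 1 ∧ f x = 1

/-- Hahn–Banach via quotient: if `‖x‖ = 1` and `x ⊥_B u`, there is a norming
functional vanishing on `u`. -/
lemma exists_norming_functional {X : Type*} [NormedAddCommGroup X] [NormedSpace ℝ X]
    (x u : X) (hx1 : ‖x‖ = 1) (h : ∀ l : ℝ, ‖x + l • u‖ ≥ 1) :
    ∃ g : X →L[ℝ] ℝ, ‖g‖ = 1 ∧ g x = 1 ∧ g u = 0 := by
  set S : Submodule ℝ X := Submodule.span ℝ {u} with hS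
  haveI : IsClosed (S : Set X) := S.closed_of_finiteDimensional
  -- the continuous quotient map
  let π : X →L[ℝ] X ⧸ S :=
    { S.mkQ with
      cont := continuous_quot_mk }
  have hπ : ∀ z : X, π z = Submodule.Quotient.mk z := fun z => rfl
  -- norm of the class of x is 1
  have hlow : (1 : ℝ) ≤ ‖(Submodule.Quotient.mk x : X ⧸ S)‖ := by
    by_contra hc
    push_neg at hc
    obtain ⟨ε, hε, hεlt⟩ : ∃ ε : ℝ, 0 < ε ∧ ‖(Submodule.Quotient.mk x : X ⧸ S)‖ + ε < 1 :=
      ⟨(1 - ‖(Submodule.Quotient.mk x : X ⧸ S)‖) / 2, by linarith, by linarith⟩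
    obtain ⟨a, ha, hna⟩ := Submodule.Quotient.norm_mk_lt (Submodule.Quotient.mk x : X ⧸ S) hε
    have hmem : a - x ∈ S := (Submodule.Quotient.eq S).mp ha
    obtain ⟨l, hl⟩ := Submodule.mem_span_singleton.mp hmem
    have : a = x + l • u := by
      have := hl.symm
      rw [← this]; abel
    have h1 : (1 : ℝ) ≤ ‖a‖ := this ▸ h l
    linarith
  have hup : ‖(Submodule.Quotient.mk x : X ⧸ S)‖ ≤ 1 := by
    simpa [hx1] using Submodule.Quotient.norm_mk_le S x
  have hnorm : ‖(Submodule.Quotient.mk x : X ⧸ S)‖ = 1 := le_antisymm hup hlow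
  have hxne : (Submodule.Quotient.mk x : X ⧸ S) ≠ 0 := by
    intro h0
    rw [h0, norm_zero] at hnorm
    exact one_ne_zero hnorm.symm
  obtain ⟨f, hf1, hfx⟩ := exists_dual_vector ℝ (Submodule.Quotient.mk x : X ⧸ S) (norm_ne_zero_iff.mpr hxne)
  refine ⟨f.comp π, ?_, ?_, ?_⟩
  · apply le_antisymm
    · refine ContinuousLinearMap.opNorm_le_bound _ zero_le_one fun z => ?_
      calc ‖(f.comp π) z‖ = ‖f (Submodule.Quotient.mk z)‖ := rfl
        _ ≤ ‖f‖ * ‖(Submodule.Quotient.mk z : X ⧸ S)‖ := f.le_opNorm _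
        _ ≤ 1 * ‖z‖ := by
            rw [hf1]
            exact mul_le_mul_of_nonneg_left (Submodule.Quotient.norm_mk_le S z) zero_le_one
    · have : ‖(f.comp π) x‖ ≤ ‖f.comp π‖ * ‖x‖ := (f.comp π).le_opNorm x
      have hval : (f.comp π) x = 1 := by
        show f (Submodule.Quotient.mk x) = 1
        rw [hfx, hnorm]; norm_num
      rw [hval, hx1, mul_one] at this
      simpa using this
  · show f (Submodule.Quotient.mk x) = 1
    rw [hfx, hnorm]; norm_num
  · show f (Submodule.Quotient.mk u) = 0
    have : (Submodule.Quotient.mk u : X ⧸ S) = 0 :=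
      (Submodule.Quotient.mk_eq_zero S).mpr (Submodule.mem_span_singleton_self u)
    rw [this, map_zero]

/-- From orthogonality in the product with `‖y‖ < 1`, extract orthogonality in `X`. -/
lemma orth_fst {X Y : Type*} [NormedAddCommGroup X] [NormedSpace ℝ X]
    [NormedAddCommGroup Y] [NormedSpace ℝ Y]
    (x : X) (y : Y) (hx1 : ‖x‖ = 1) (hy : ‖y‖ < 1) (u : X) (v : Y)
    (h : BJOrth ((x, y) : X × Y) (u, v)) :
    ∀ l : ℝ, ‖x + l • u‖ ≥ 1 := by
  have hxy : ‖((x, y) : X × Y)‖ = 1 := by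
    rw [Prod.norm_def, hx1]
    exact max_eq_left hy.le
  intro l
  rcases eq_or_ne l 0 with rfl | hl
  · simpa [hx1] using le_refl (1 : ℝ)
  -- pick small t of the same sign (a scalar multiple s*l with 0 < s ≤ 1)
  set ε : ℝ := min |l| ((1 - ‖y‖) / (1 + ‖v‖)) with hε
  have hv1 : (0:ℝ) < 1 + ‖v‖ := by positivity
  have hεpos : 0 < ε := by
    apply lt_min (abs_pos.mpr hl)
    apply div_pos (by linarith) hv1
  have hεle : ε ≤ |l| := min_le_left _ _
  set s : ℝ := ε / |l| with hs
  have hspos : 0 < s := div_pos hεpos (abs_pos.mpr hl)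
  have hsle : s ≤ 1 := (div_le_one (abs_pos.mpr hl)).mpr hεle
  set t : ℝ := s * l with ht
  -- at t, the second coordinate is small
  have hyv : ‖y + t • v‖ < 1 := by
    have htabs : |t| = ε := by
      rw [ht, abs_mul, hs, abs_div, abs_abs, abs_of_pos hεpos, div_mul_cancel₀]
      exact abs_ne_zero.mpr hl
    have hεsmall : ε * ‖v‖ < 1 - ‖y‖ := by
      calc ε * ‖v‖ ≤ (1 - ‖y‖) / (1 + ‖v‖) * ‖v‖ :=
            mul_le_mul_of_nonneg_right (min_le_right _ _) (norm_nonneg _)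
        _ < 1 - ‖y‖ := by
            rw [div_mul_eq_mul_div, div_lt_iff₀ hv1]
            have : (0:ℝ) < 1 - ‖y‖ := by linarith
            nlinarith [norm_nonneg v]
    calc ‖y + t • v‖ ≤ ‖y‖ + ‖t • v‖ := norm_add_le _ _
      _ = ‖y‖ + |t| * ‖v‖ := by rw [norm_smul, Real.norm_eq_abs]
      _ = ‖y‖ + ε * ‖v‖ := by rw [htabs]
      _ < 1 := by linarith
  -- hence the first coordinate at t is ≥ 1
  have h1 : ‖x + t • u‖ ≥ 1 := by
    have := h t
    rw [hxy] at this
    have hmax : max ‖x + t • u‖ ‖y + t • v‖ ≥ 1 := by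
      simpa [Prod.norm_def, Prod.fst, Prod.snd] using this
    rcases max_cases ‖x + t • u‖ ‖y + t • v‖ with ⟨he, _⟩ | ⟨he, _⟩
    · rwa [he] at hmax
    · rw [he] at hmax; linarith
  -- convexity argument: x + t•u = (1-s)•x + s•(x + l•u)
  have hconv : x + t • u = (1 - s) • x + s • (x + l • u) := by
    rw [ht]
    module
  have : (1:ℝ) ≤ (1 - s) * ‖x‖ + s * ‖x + l • u‖ := by
    calc (1:ℝ) ≤ ‖x + t • u‖ := h1
      _ = ‖(1 - s) • x + s • (x + l • u)‖ := by rw [hconv]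
      _ ≤ ‖(1 - s) • x‖ + ‖s • (x + l • u)‖ := norm_add_le _ _
      _ = (1 - s) * ‖x‖ + s * ‖x + l • u‖ := by
          rw [norm_smul, norm_smul, Real.norm_eq_abs, Real.norm_eq_abs,
            abs_of_nonneg (by linarith : (0:ℝ) ≤ 1 - s), abs_of_pos hspos]
  rw [hx1, mul_one] at this
  -- 1 ≤ (1-s) + s * N  ⟹  N ≥ 1
  nlinarith

/-- If `x` is a smooth point of `S_X` and `‖y‖ < 1`, then Birkhoff–James
orthogonality is right-additive at `(x,y)` in the max-norm product. -/
theorem statement18 {X Y : Type*} [NormedAddCommGroup X] [NormedSpace ℝ X]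
    [NormedAddCommGroup Y] [NormedSpace ℝ Y]
    (x : X) (y : Y) (hx : SmoothPt x) (hy : ‖y‖ < 1)
    (u₁ u₂ : X) (v₁ v₂ : Y)
    (h₁ : BJOrth ((x, y) : X × Y) (u₁, v₁))
    (h₂ : BJOrth ((x, y) : X × Y) (u₂, v₂)) :
    BJOrth ((x, y) : X × Y) (u₁ + u₂, v₁ + v₂) := by
  obtain ⟨hx1, f₀, hf₀, huniq⟩ := hx
  have ho₁ := orth_fst x y hx1 hy u₁ v₁ h₁
  have ho₂ := orth_fst x y hx1 hy u₂ v₂ h₂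
  obtain ⟨g₁, hg₁n, hg₁x, hg₁u⟩ := exists_norming_functional x u₁ hx1 ho₁
  obtain ⟨g₂, hg₂n, hg₂x, hg₂u⟩ := exists_norming_functional x u₂ hx1 ho₂
  have e₁ : g₁ = f₀ := huniq g₁ ⟨hg₁n, hg₁x⟩
  have e₂ : g₂ = f₀ := huniq g₂ ⟨hg₂n, hg₂x⟩
  have hf₀u₁ : f₀ u₁ = 0 := e₁ ▸ hg₁u
  have hf₀u₂ : f₀ u₂ = 0 := e₂ ▸ hg₂u
  have hxy : ‖((x, y) : X × Y)‖ = 1 := by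
    rw [Prod.norm_def, hx1]
    exact max_eq_left hy.le
  intro l
  rw [hxy]
  have key : ‖x + l • (u₁ + u₂)‖ ≥ 1 := by
    have hval : f₀ (x + l • (u₁ + u₂)) = 1 := by
      rw [map_add, map_smul, map_add, hf₀u₁, hf₀u₂, hf₀.2]
      simp
    calc (1:ℝ) = ‖f₀ (x + l • (u₁ + u₂))‖ := by rw [hval]; norm_num
      _ ≤ ‖f₀‖ * ‖x + l • (u₁ + u₂)‖ := f₀.le_opNorm _
      _ = ‖x + l • (u₁ + u₂)‖ := by rw [hf₀.1, one_mul]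
  calc ‖((x, y) : X × Y) + l • (u₁ + u₂, v₁ + v₂)‖
      = max ‖x + l • (u₁ + u₂)‖ ‖y + l • (v₁ + v₂)‖ := by
        simp [Prod.norm_def, Prod.smul_mk]
    _ ≥ ‖x + l • (u₁ + u₂)‖ := le_max_left _ _
    _ ≥ 1 := key
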